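/- Let G be a bipartite graph with bipartition (L, R), let k be a positive integer, and let Ḡ be the graph obtained from G by cliquifying L and then cliquifying R. If Ḡ has a path decomposition of width at most k − 1, then L and R belong to the same connected component of R_k(G); moreover, there exists a monotone reconfiguration sequence from L to R in R_k(G). -/

import Mathlib

/-- A set of vertices is a vertex cover of `G` if it contains at least one
endpoint of every edge. -/
def IsVC {α : Type*} (G : SimpleGraph α) (S : Finset α) : Prop :=
  ∀ ⦃u v : α⦄, G.Adj u v → u ∈ S ∨ v ∈ S

/-- A reconfiguration sequence in `R_k(G)` from `S` to `T`. -/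
def ReconfSeq {α : Type*} [DecidableEq α] (G : SimpleGraph α) (k : ℕ) (S T : Finset α)
    (t : ℕ) (Q : ℕ → Finset α) : Prop :=
  Q 0 = S ∧ Q t = T ∧ (∀ i ≤ t, IsVC G (Q i) ∧ (Q i).card ≤ k) ∧
    ∀ i < t, (symmDiff (Q i) (Q (i + 1))).card = 1

/-- A reconfiguration sequence is monotone if every vertex changes its
membership at most once over the whole sequence. -/
def MonotoneSeq {α : Type*} [DecidableEq α] (t : ℕ) (Q : ℕ → Finset α) : Prop :=
  ∀ v : α, ((Finset.range t).filter (fun i => v ∈ symmDiff (Q i) (Q (i + 1)))).card ≤ 1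

/-- Cliquifying a vertex subset `S` of `G`: add all missing edges between
vertices of `S`. -/
def cliquify {α : Type*} [DecidableEq α] (G : SimpleGraph α) (S : Finset α) :
    SimpleGraph α where
  Adj u v := (G.Adj u v ∨ (u ∈ S ∧ v ∈ S)) ∧ u ≠ v
  symm := by
    constructor
    intro u v h
    exact ⟨h.1.elim (fun h' => Or.inl h'.symm) (fun h' => Or.inr ⟨h'.2, h'.1⟩), h.2.symm⟩
  loopless := by constructor; intro u h; exact h.2 rfl

/-- `B 0, …, B (p-1)` is a path decomposition of `G`. -/
structure PathDecomp {α : Type*} (G : SimpleGraph α) (p : ℕ) (B : ℕ → Finset α) : Prop where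
  mem_bag : ∀ v : α, ∃ i, i < p ∧ v ∈ B i
  edge_bag : ∀ ⦃u v : α⦄, G.Adj u v → ∃ i, i < p ∧ u ∈ B i ∧ v ∈ B i
  interval : ∀ (v : α) (i j l : ℕ), i ≤ j → j ≤ l → l < p → v ∈ B i → v ∈ B l → v ∈ B j

/-- first bag (capped comparison) containing `v`, defaulting to `b`. -/
private def fbag {V : Type} [DecidableEq V] (B : ℕ → Finset V) (b : ℕ) (v : V) : ℕ :=
  Nat.find (p := fun i => v ∈ B i ∨ i = b) ⟨b, Or.inr rfl⟩

/-- last bag index `≤ b` containing `v` (or 0). -/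
private def lbag {V : Type} [DecidableEq V] (B : ℕ → Finset V) (b : ℕ) (v : V) : ℕ :=
  Nat.findGreatest (fun i => v ∈ B i) b

private def vkey {V : Type} [DecidableEq V] (B : ℕ → Finset V) (a b : ℕ) (L : Finset V)
    (v : V) : ℕ :=
  if v ∈ L then 2 * lbag B b v + 1 else 2 * max a (fbag B b v)

private lemma clique_in_bag {V : Type} [DecidableEq V] {H : SimpleGraph V} {p : ℕ}
    {B : ℕ → Finset V} (hPD : PathDecomp H p B) (hp : 0 < p) (S : Finset V)
    (hclique : ∀ u ∈ S, ∀ v ∈ S, u ≠ v → H.Adj u v) :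
    ∃ a, a < p ∧ S ⊆ B a := by
  classical
  rcases S.eq_empty_or_nonempty with h | hne
  · exact ⟨0, hp, by simp [h]⟩
  · have hex : ∀ v : V, ∃ i, i < p ∧ v ∈ B i := hPD.mem_bag
    set f : V → ℕ := fun v => Nat.find (hex v) with hf
    obtain ⟨v0, hv0, hmax⟩ := S.exists_max_image f hne
    refine ⟨f v0, (Nat.find_spec (hex v0)).1, ?_⟩
    intro v hv
    by_cases hvv : v = v0
    · subst hvv; exact (Nat.find_spec (hex v)).2
    · obtain ⟨j, hj, hvj, hv0j⟩ := hPD.edge_bag (hclique v hv v0 hv0 hvv)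
      have h1 : f v ≤ f v0 := hmax v hv
      have h2 : f v0 ≤ j := Nat.find_min' (hex v0) ⟨hj, hv0j⟩
      exact hPD.interval v (f v) (f v0) j h1 h2 hj (Nat.find_spec (hex v)).2 hvj

private lemma key_lemma {V : Type} [Fintype V] [DecidableEq V] (G : SimpleGraph V)
    (k : ℕ) (L R : Finset V)
    (hcover : ∀ v : V, v ∈ L ∨ v ∈ R) (hdisj : Disjoint L R)
    (hbip : ∀ ⦃u v : V⦄, G.Adj u v → (u ∈ L ∧ v ∈ R) ∨ (u ∈ R ∧ v ∈ L))
    (p : ℕ) (B : ℕ → Finset V)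
    (hedge : ∀ ⦃u v : V⦄, G.Adj u v → ∃ i, i < p ∧ u ∈ B i ∧ v ∈ B i)
    (hint : ∀ (v : V) (i j l : ℕ), i ≤ j → j ≤ l → l < p → v ∈ B i → v ∈ B l → v ∈ B j)
    (hwidth : ∀ i < p, (B i).card ≤ k)
    (a b : ℕ) (hab : a ≤ b) (hbp : b < p) (hL : L ⊆ B a) (hR : R ⊆ B b) :
    ∃ t Q, ReconfSeq G k L R t Q ∧ MonotoneSeq t Q := by
  classical
  have hap : a < p := lt_of_le_of_lt hab hbp
  have hLR : ∀ v : V, v ∉ L ↔ v ∈ R := by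
    intro v
    constructor
    · intro h; exact (hcover v).resolve_left h
    · intro h hL'; exact (Finset.disjoint_left.mp hdisj) hL' h
  -- basic facts about fbag / lbag
  have hfb_leb : ∀ v, fbag B b v ≤ b := fun v => Nat.find_min' _ (Or.inr rfl)
  have hfb_le : ∀ v j, v ∈ B j → fbag B b v ≤ j := fun v j hj => Nat.find_min' _ (Or.inl hj)
  have hfb_mem : ∀ v ∈ R, v ∈ B (fbag B b v) := by
    intro v hv
    rcases Nat.find_spec (p := fun i => v ∈ B i ∨ i = b)
      (⟨b, Or.inr rfl⟩ : ∃ i, v ∈ B i ∨ i = b) with h | h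
    · exact h
    · rw [fbag, h]; exact hR hv
  have hlb_leb : ∀ v, lbag B b v ≤ b := fun v => Nat.findGreatest_le b
  have hlb_gea : ∀ v ∈ L, a ≤ lbag B b v := fun v hv => Nat.le_findGreatest (P := fun i => v ∈ B i) hab (hL hv)
  have hlb_mem : ∀ v ∈ L, v ∈ B (lbag B b v) := fun v hv => Nat.findGreatest_spec (P := fun i => v ∈ B i) hab (hL hv)
  have hlb_ge : ∀ v ∈ L, ∀ j, j < p → v ∈ B j → min b j ≤ lbag B b v := by
    intro v hv j hjp hj
    rcases le_or_gt j b with h | h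
    · have := Nat.le_findGreatest (P := fun i => v ∈ B i) h hj
      exact le_trans (min_le_right _ _) this
    · have hvb : v ∈ B b := hint v a b j hab (le_of_lt h) hjp (hL hv) hj
      have := Nat.le_findGreatest (P := fun i => v ∈ B i) (le_refl b) hvb
      exact le_trans (min_le_left _ _) this
  -- key comparison across a common bag
  have hkey_lt : ∀ u ∈ L, ∀ v ∈ R, ∀ j, j < p → u ∈ B j → v ∈ B j →
      vkey B a b L u = 2 * lbag B b u + 1 ∧ vkey B a b L v = 2 * max a (fbag B b v) ∧
      vkey B a b L v < vkey B a b L u := by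
    intro u hu v hv j hjp huj hvj
    have h1 : vkey B a b L u = 2 * lbag B b u + 1 := by rw [vkey, if_pos hu]
    have h2 : vkey B a b L v = 2 * max a (fbag B b v) := by
      rw [vkey, if_neg (fun h => (Finset.disjoint_left.mp hdisj) h hv)]
    refine ⟨h1, h2, ?_⟩
    have hfvlu : fbag B b v ≤ lbag B b u := by
      have h3 : fbag B b v ≤ min b j := le_min (hfb_leb v) (hfb_le v j hvj)
      exact le_trans h3 (hlb_ge u hu j hjp huj)
    have halu : a ≤ lbag B b u := hlb_gea u hu
    have : max a (fbag B b v) ≤ lbag B b u := max_le halu hfvlu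
    omega
  -- the sorted enumeration
  set key : V → ℕ := vkey B a b L with hkeydef
  set l : List V := (Finset.univ.toList (α := V)).mergeSort
      (fun u v => decide (key u ≤ key v)) with hl
  have hperm : l.Perm (Finset.univ.toList (α := V)) := List.mergeSort_perm _ _
  have hnodup : l.Nodup := hperm.nodup_iff.mpr (Finset.univ.nodup_toList)
  have hmem : ∀ v : V, v ∈ l := fun v => hperm.mem_iff.mpr (Finset.mem_toList.mpr (Finset.mem_univ v))
  have hsort : l.Pairwise (fun u v => key u ≤ key v) := by
    have := List.pairwise_mergeSort (le := fun u v => decide (key u ≤ key v))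
      (by intro x y z hx hy; simp only [decide_eq_true_eq] at *; omega)
      (by intro x y; simp only [Bool.or_eq_true, decide_eq_true_eq]; omega)
      (Finset.univ.toList (α := V))
    exact this.imp (fun h => of_decide_eq_true h)
  set n : ℕ := l.length with hn
  set T : ℕ → Finset V := fun i => (l.take i).toFinset with hT
  set Q : ℕ → Finset V := fun i => symmDiff L (T i) with hQ
  -- prefix property
  have hpre : ∀ i, ∀ x ∈ T i, ∀ y, y ∉ T i → key x ≤ key y := by
    intro i x hx y hy
    have hsp := hsort
    rw [← List.take_append_drop i l] at hsp
    have := (List.pairwise_append.mp hsp).2.2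
    refine this x (List.mem_toFinset.mp hx) y ?_
    have hyl : y ∈ l := hmem y
    rw [← List.take_append_drop i l, List.mem_append] at hyl
    rcases hyl with h | h
    · exact absurd (List.mem_toFinset.mpr h) hy
    · exact h
  -- membership in Q
  have hQmem : ∀ i v, v ∈ Q i ↔ ((v ∈ L ∧ v ∉ T i) ∨ (v ∈ R ∧ v ∈ T i)) := by
    intro i v
    rw [hQ]
    simp only [Finset.mem_symmDiff]
    constructor
    · rintro (⟨h1, h2⟩ | ⟨h1, h2⟩)
      · exact Or.inl ⟨h1, h2⟩
      · exact Or.inr ⟨(hLR v).mp h2, h1⟩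
    · rintro (⟨h1, h2⟩ | ⟨h1, h2⟩)
      · exact Or.inl ⟨h1, h2⟩
      · exact Or.inr ⟨h2, fun h => (Finset.disjoint_left.mp hdisj) h h1⟩
  -- every Q i is a vertex cover
  have hVC : ∀ i, IsVC G (Q i) := by
    intro i
    have claim : ∀ u v : V, G.Adj u v → u ∈ L → v ∈ R → u ∈ Q i ∨ v ∈ Q i := by
      intro u v hadj hu hv
      obtain ⟨j, hjp, huj, hvj⟩ := hedge hadj
      by_cases hut : u ∈ T i
      · right
        rw [hQmem]
        refine Or.inr ⟨hv, ?_⟩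
        by_contra hvt
        have h1 := hpre i u hut v hvt
        have h2 := (hkey_lt u hu v hv j hjp huj hvj).2.2
        omega
      · left; rw [hQmem]; exact Or.inl ⟨hu, hut⟩
    intro u v hadj
    rcases hbip hadj with ⟨hu, hv⟩ | ⟨hu, hv⟩
    · exact claim u v hadj hu hv
    · exact (claim v u hadj.symm hv hu).symm
  -- every Q i is small
  have hsize : ∀ i, (Q i).card ≤ k := by
    intro i
    rcases (T i).eq_empty_or_nonempty with he | hne
    · have : Q i = L := by rw [hQ]; simp [he]
      rw [this]
      exact le_trans (Finset.card_le_card hL) (hwidth a hap)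
    · obtain ⟨x0, hx0, hkx0⟩ := Finset.mem_image.mp
        (Finset.max'_mem ((T i).image key) (hne.image key))
      set c : ℕ := ((T i).image key).max' (hne.image key) with hc
      have hc1 : ∀ x ∈ T i, key x ≤ c :=
        fun x hx => Finset.le_max' _ _ (Finset.mem_image_of_mem key hx)
      have hc2 : ∀ y, y ∉ T i → c ≤ key y := by
        intro y hy
        rw [← hkx0]
        exact hpre i x0 hx0 y hy
      set m : ℕ := min b (max a (c / 2)) with hm
      have ham : a ≤ m := le_min hab (le_max_left _ _)
      have hmb : m ≤ b := min_le_left _ _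
      have hmp : m < p := lt_of_le_of_lt hmb hbp
      have hsub : Q i ⊆ B m := by
        intro v hv
        rcases (hQmem i v).mp hv with ⟨hvL, hvT⟩ | ⟨hvR, hvT⟩
        · have hkv : c ≤ key v := hc2 v hvT
          have hkeq : key v = 2 * lbag B b v + 1 := by rw [hkeydef, vkey, if_pos hvL]
          have hlb2 : c / 2 ≤ lbag B b v := by omega
          have hmlu : m ≤ lbag B b v :=
            le_trans (min_le_right _ _) (max_le (hlb_gea v hvL) hlb2)
          exact hint v a m (lbag B b v) ham hmlu (lt_of_le_of_lt (hlb_leb v) hbp)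
            (hL hvL) (hlb_mem v hvL)
        · have hkv : key v ≤ c := hc1 v hvT
          have hvnL : v ∉ L := fun h => (Finset.disjoint_left.mp hdisj) h hvR
          have hkeq : key v = 2 * max a (fbag B b v) := by rw [hkeydef, vkey, if_neg hvnL]
          have h2 : max a (fbag B b v) ≤ c / 2 := by omega
          have hfm : fbag B b v ≤ m :=
            le_min (hfb_leb v) (le_trans (le_trans (le_max_right _ _) h2) (le_max_right a _))
          exact hint v (fbag B b v) m b hfm hmb hbp (hfb_mem v hvR) (hR hvR)
      exact le_trans (Finset.card_le_card hsub) (hwidth m hmp)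
  -- step structure
  have hstep : ∀ i (hi : i < n), T (i + 1) = insert (l[i]'hi) (T i) ∧ (l[i]'hi) ∉ T i := by
    intro i hi
    have htake : l.take (i + 1) = l.take i ++ [l[i]'hi] := by
      rw [List.take_succ, List.getElem?_eq_getElem hi]
      rfl
    constructor
    · rw [hT]
      simp only
      rw [htake, List.toFinset_append]
      ext x
      simp [List.mem_toFinset, Or.comm]
    · have hnd : (l.take (i + 1)).Nodup := (List.take_sublist _ _).nodup hnodup
      rw [htake] at hnd
      have := (List.pairwise_append.mp hnd).2.2
      intro hmem'
      exact this _ (List.mem_toFinset.mp hmem') (l[i]'hi) (List.mem_singleton_self _) rfl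
  have hsd : ∀ i (hi : i < n), symmDiff (Q i) (Q (i + 1)) = {l[i]'hi} := by
    intro i hi
    have h1 : symmDiff (Q i) (Q (i + 1)) = symmDiff (T i) (T (i + 1)) := by
      rw [hQ]
      ext x
      simp only [Finset.mem_symmDiff]
      tauto
    obtain ⟨h2, h3⟩ := hstep i hi
    rw [h1, h2]
    ext x
    simp only [Finset.mem_symmDiff, Finset.mem_insert, Finset.mem_singleton]
    constructor
    · rintro (⟨hx1, hx2⟩ | ⟨hx1, hx2⟩)
      · exact absurd (Or.inr hx1) hx2
      · rcases hx1 with h | h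
        · exact h
        · exact absurd h hx2
    · intro h
      subst h
      exact Or.inr ⟨Or.inl rfl, h3⟩
  refine ⟨n, Q, ⟨?_, ?_, fun i _ => ⟨hVC i, hsize i⟩, ?_⟩, ?_⟩
  · -- Q 0 = L
    rw [hQ]
    simp only
    have : T 0 = ∅ := by rw [hT]; simp
    rw [this, ← Finset.bot_eq_empty, symmDiff_bot]
  · -- Q n = R
    have hTn : T n = Finset.univ := by
      rw [hT, hn]
      simp only [List.take_length]
      ext x
      simp [List.mem_toFinset, hmem]
    rw [hQ]
    simp only
    rw [hTn, ← Finset.top_eq_univ, symmDiff_top]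
    ext x
    exact Finset.mem_compl.trans (hLR x)
  · intro i hi
    rw [hsd i hi]
    simp
  · intro v
    rw [Finset.card_le_one]
    intro i hi j hj
    simp only [Finset.mem_filter, Finset.mem_range] at hi hj
    rw [hsd i hi.1] at hi
    rw [hsd j hj.1] at hj
    have h1 : v = l[i]'hi.1 := Finset.mem_singleton.mp hi.2
    have h2 : v = l[j]'hj.1 := Finset.mem_singleton.mp hj.2
    exact (hnodup.getElem_inj_iff).mp (h1 ▸ h2 ▸ rfl : l[i]'hi.1 = l[j]'hj.1)

/-- Let `G` be bipartite with bipartition `(L, R)` and let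
`Ḡ` be obtained from `G` by cliquifying `L` and then `R`.  If `Ḡ` has a path
decomposition of width at most `k - 1`, then there exists a monotone
reconfiguration sequence from `L` to `R` in `R_k(G)` (in particular `L` and
`R` lie in the same connected component of `R_k(G)`). -/
theorem stmt1 {V : Type} [Fintype V] [DecidableEq V] (G : SimpleGraph V)
    (k : ℕ) (hk : 0 < k) (L R : Finset V)
    (hcover : ∀ v : V, v ∈ L ∨ v ∈ R) (hdisj : Disjoint L R)
    (hbip : ∀ ⦃u v : V⦄, G.Adj u v → (u ∈ L ∧ v ∈ R) ∨ (u ∈ R ∧ v ∈ L))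
    (p : ℕ) (B : ℕ → Finset V)
    (hPD : PathDecomp (cliquify (cliquify G L) R) p B)
    (hwidth : ∀ i < p, (B i).card ≤ k) :
    ∃ t Q, ReconfSeq G k L R t Q ∧ MonotoneSeq t Q := by
  classical
  rcases isEmpty_or_nonempty V with hV | hV
  · have hLe : L = ∅ := Finset.eq_empty_of_forall_notMem (fun x _ => (hV.false x).elim)
    have hRe : R = ∅ := Finset.eq_empty_of_forall_notMem (fun x _ => (hV.false x).elim)
    refine ⟨0, fun _ => ∅, ⟨hLe.symm, hRe.symm, ?_, ?_⟩, ?_⟩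
    · intro i _
      exact ⟨fun u v h => (hV.false u).elim, by simp⟩
    · intro i hi; omega
    · intro v; simp
  · obtain ⟨v0⟩ := hV
    obtain ⟨i0, hi0, _⟩ := hPD.mem_bag v0
    have hp : 0 < p := lt_of_le_of_lt (Nat.zero_le _) hi0
    have hcliqL : ∀ u ∈ L, ∀ v ∈ L, u ≠ v → (cliquify (cliquify G L) R).Adj u v :=
      fun u hu v hv hne => ⟨Or.inl ⟨Or.inr ⟨hu, hv⟩, hne⟩, hne⟩
    have hcliqR : ∀ u ∈ R, ∀ v ∈ R, u ≠ v → (cliquify (cliquify G L) R).Adj u v :=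
      fun u hu v hv hne => ⟨Or.inr ⟨hu, hv⟩, hne⟩
    obtain ⟨a, hap, hLa⟩ := clique_in_bag hPD hp L hcliqL
    obtain ⟨b, hbp, hRb⟩ := clique_in_bag hPD hp R hcliqR
    have hedge : ∀ ⦃u v : V⦄, G.Adj u v → ∃ i, i < p ∧ u ∈ B i ∧ v ∈ B i :=
      fun u v h => hPD.edge_bag ⟨Or.inl ⟨Or.inl h, h.ne⟩, h.ne⟩
    rcases le_or_gt a b with hab | hba
    · exact key_lemma G k L R hcover hdisj hbip p B hedge hPD.interval hwidth a b hab hbp hLa hRb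
    · set B' : ℕ → Finset V := fun i => B (p - 1 - i) with hB'
      have hidx : ∀ i, i < p → p - 1 - (p - 1 - i) = i := by intro i h; omega
      have hedge' : ∀ ⦃u v : V⦄, G.Adj u v → ∃ i, i < p ∧ u ∈ B' i ∧ v ∈ B' i := by
        intro u v h
        obtain ⟨j, hjp, h1, h2⟩ := hedge h
        refine ⟨p - 1 - j, by omega, ?_, ?_⟩ <;>
          · rw [hB']; simp only; rw [hidx j hjp]; assumption
      have hint' : ∀ (v : V) (i j m : ℕ), i ≤ j → j ≤ m → m < p →
          v ∈ B' i → v ∈ B' m → v ∈ B' j := by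
        intro v i j m hij hjm hmp h1 h2
        exact hPD.interval v (p - 1 - m) (p - 1 - j) (p - 1 - i) (by omega) (by omega)
          (by omega) h2 h1
      have hwidth' : ∀ i < p, (B' i).card ≤ k := fun i h => hwidth _ (by omega)
      have hLa' : L ⊆ B' (p - 1 - a) := by
        rw [hB']; simp only; rw [hidx a hap]; exact hLa
      have hRb' : R ⊆ B' (p - 1 - b) := by
        rw [hB']; simp only; rw [hidx b hbp]; exact hRb
      exact key_lemma G k L R hcover hdisj hbip p B' hedge' hint' hwidth'
        (p - 1 - a) (p - 1 - b) (by omega) (by omega) hLa' hRb'
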